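/- Fix m ≥ 1 and set T := ∑_{n=m+1}^∞ 2^{1-n} ∑_{k=0}^m C(n-1,k). Then T ≤ 2m + 1. -/

import Mathlib

open Finset

lemma half_norm : ‖(1/2 : ℝ)‖ < 1 := by rw [Real.norm_eq_abs, abs_of_pos] <;> norm_num

lemma aux_summable (k : ℕ) : Summable (fun n : ℕ ↦ ((n + k).choose k : ℝ) * (1/2)^n) :=
  summable_choose_mul_geometric_of_norm_lt_one k half_norm

lemma aux_tsum (k : ℕ) : ∑' n : ℕ, ((n + k).choose k : ℝ) * (1/2)^n = 2^(k+1) := by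
  rw [tsum_choose_mul_geometric_of_norm_lt_one k half_norm]
  rw [show (1 : ℝ) - 1/2 = 1/2 by norm_num, one_div, one_div, ← inv_pow, inv_inv]

lemma shifted_eq (m k : ℕ) (hk : k ≤ m) (n : ℕ) :
    ((n + m).choose k : ℝ) * (1/2)^(n + m)
      = (1/2 : ℝ)^k * ((((n + (m - k)) + k).choose k : ℝ) * (1/2)^(n + (m - k))) := by
  have h : n + m = (n + (m - k)) + k := by omega
  rw [h, pow_add]; ring

lemma shifted_summable (m k : ℕ) (hk : k ≤ m) :
    Summable (fun n : ℕ ↦ ((n + m).choose k : ℝ) * (1/2)^(n + m)) := by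
  have := ((aux_summable k).mul_left ((1/2 : ℝ)^k)).comp_injective
    (add_left_injective (m - k))
  refine this.congr (fun n ↦ ?_)
  exact (shifted_eq m k hk n).symm

lemma term_le_two (m k : ℕ) (hk : k ≤ m) :
    ∑' n : ℕ, ((n + m).choose k : ℝ) * (1/2)^(n + m) ≤ 2 := by
  have key : ∑' n : ℕ, ((n + m).choose k : ℝ) * (1/2)^(n + m)
      ≤ ∑' n : ℕ, (1/2 : ℝ)^k * (((n + k).choose k : ℝ) * (1/2)^n) := by
    apply Summable.tsum_le_tsum_of_inj (fun n ↦ n + (m - k)) (add_left_injective (m - k))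
    · intro a _
      positivity
    · intro n
      exact le_of_eq (shifted_eq m k hk n)
    · exact shifted_summable m k hk
    · exact (aux_summable k).mul_left _
  rw [tsum_mul_left, aux_tsum k] at key
  calc ∑' n : ℕ, ((n + m).choose k : ℝ) * (1/2)^(n + m)
      ≤ (1/2 : ℝ)^k * 2^(k+1) := key
    _ = 2 := by rw [pow_succ, one_div, inv_pow, inv_mul_cancel_left₀ (by positivity)]

lemma term_zero (m : ℕ) (hm : 1 ≤ m) :
    ∑' n : ℕ, ((n + m).choose 0 : ℝ) * (1/2)^(n + m) ≤ 1 := by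
  have h1 : ∀ n : ℕ, ((n + m).choose 0 : ℝ) * (1/2)^(n + m)
      = (1/2 : ℝ)^m * (1/2)^n := by
    intro n; simp [pow_add, mul_comm]
  rw [tsum_congr h1, tsum_mul_left, tsum_geometric_of_lt_one (by norm_num) (by norm_num)]
  rw [show (1 : ℝ) - 1/2 = 1/2 by norm_num]
  have : (1/2 : ℝ)^m ≤ 1/2 := by
    calc (1/2 : ℝ)^m ≤ (1/2)^1 := pow_le_pow_of_le_one (by norm_num) (by norm_num) hm
      _ = 1/2 := pow_one _
  calc (1/2 : ℝ)^m * (1/2)⁻¹ ≤ (1/2) * (1/2)⁻¹ := by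
        apply mul_le_mul_of_nonneg_right this (by norm_num)
    _ = 1 := by norm_num

theorem tail_sum_le (m : ℕ) (hm : 1 ≤ m) :
    (∑' n : ℕ, (2 : ℝ) ^ ((1 : ℤ) - ((n : ℤ) + m + 1)) *
        ∑ k ∈ Finset.range (m + 1), (((n + m).choose k : ℝ))) ≤ 2 * m + 1 := by
  have hexp : ∀ n : ℕ, (2 : ℝ) ^ ((1 : ℤ) - ((n : ℤ) + m + 1)) = (1/2 : ℝ)^(n + m) := by
    intro n
    rw [show (1 : ℤ) - ((n : ℤ) + m + 1) = -((n : ℤ) + m) by ring,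
      show ((n : ℤ) + m) = ((n + m : ℕ) : ℤ) by push_cast; ring,
      zpow_neg, zpow_natCast, one_div, inv_pow]
  have hre : ∀ n : ℕ, (2 : ℝ) ^ ((1 : ℤ) - ((n : ℤ) + m + 1)) *
      ∑ k ∈ Finset.range (m + 1), (((n + m).choose k : ℝ))
      = ∑ k ∈ Finset.range (m + 1), ((n + m).choose k : ℝ) * (1/2)^(n + m) := by
    intro n
    rw [hexp, Finset.mul_sum]
    exact Finset.sum_congr rfl (fun k _ ↦ by ring)
  rw [tsum_congr hre]
  rw [Summable.tsum_finsetSum (fun k hk ↦ shifted_summable m k (by simp at hk; omega))]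
  rw [Finset.sum_range_succ']
  have h1 : ∑ k ∈ Finset.range m,
      ∑' n : ℕ, ((n + m).choose (k + 1) : ℝ) * (1/2)^(n + m) ≤ m * 2 := by
    calc _ ≤ ∑ _k ∈ Finset.range m, (2 : ℝ) :=
          Finset.sum_le_sum (fun k hk ↦ term_le_two m (k+1) (by simp at hk; omega))
      _ = m * 2 := by simp [mul_comm]
  have h0 := term_zero m hm
  linarith
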